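/- Consider the dual-criticality task system consisting of the HC task τ1 with T_1 = 6, D_1 = 4, C_1^L = 1, C_1^H = 2 and the LC task τ2 with T_2 = 7, D_2 = 5, C_2^L = C_2^H = 1, with tightened deadlines equal to the real deadlines (D_1^L = 4 and D_2^L = 5). Then: (i) the existing test fails at t = 1, since E(1) = 2 > 1 (τ1 ∈ S(1) with CO_1(1) = 1 and C_1^H − C_1^L = 1, while dbf_1^H(1) = 0); and (ii) the improved test holds everywhere: I(t1,t2) ≤ t2 for all reals 0 ≤ t1 < t2. Hence the improved demand-based test strictly dominates the existing demand-based test. -/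

import Mathlib

open scoped Classical
open Finset

namespace MC

/-- `MOD t T = t - ⌊t/T⌋·T`. -/
noncomputable def MOD (t T : ℝ) : ℝ := t - (⌊t / T⌋ : ℝ) * T

/-- A dual-criticality sporadic task: minimum separation `T > 0`, low-criticality WCET
`CL` and high-criticality WCET `CH` with `0 < CL ≤ CH`, real deadline `D` and tightened
deadline `DL` with `CL ≤ DL ≤ D ≤ T`. -/
structure Task where
  T : ℝ
  D : ℝ
  DL : ℝ
  CL : ℝ
  CH : ℝ
  hT : 0 < T
  hCL : 0 < CL
  hCLCH : CL ≤ CH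
  hCLDL : CL ≤ DL
  hDLD : DL ≤ D
  hDT : D ≤ T

/-- Low-criticality demand bound function `dbf^L(t)`. -/
noncomputable def dbfL (τ : Task) (t : ℝ) : ℝ :=
  max 0 (((⌊(t - τ.DL) / τ.T⌋ : ℝ) + 1) * τ.CL)

/-- High-criticality demand bound function `dbf^H(t)`. -/
noncomputable def dbfH (τ : Task) (t : ℝ) : ℝ :=
  max 0 (((⌊(t - τ.D) / τ.T⌋ : ℝ) + 1) * τ.CH)

/-- Two-parameter low-criticality demand bound `dbf^L(t1, t2)`. -/
noncomputable def dbfL2 (τ : Task) (t1 t2 : ℝ) : ℝ :=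
  max 0 ((⌊(t2 - τ.D) / τ.T⌋ : ℝ) - (⌊(t2 - t1 - τ.D) / τ.T⌋ : ℝ) - 1) * τ.CL

/-- Unnecessary-job demand bound `dbf^{UN}(t1, t2)`. -/
noncomputable def dbfUN (τ : Task) (t1 t2 : ℝ) : ℝ :=
  if MOD t1 τ.T < τ.DL ∧ (⌊t1 / τ.T⌋ : ℝ) * τ.T + τ.DL ≤ t2 then
    min τ.CL (MOD t1 τ.T)
  else 0

/-- Maximum carry-over execution `CO(t)` pending at the start of an interval of length `t`. -/
noncomputable def CO (τ : Task) (t : ℝ) : ℝ :=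
  min τ.CL (MOD t τ.T - (τ.D - τ.DL))

/-- A release set for a task: a finite set of nonnegative reals, any two distinct
elements of which differ by at least the minimum separation `T`. -/
def ReleaseSet (τ : Task) (R : Finset ℝ) : Prop :=
  (∀ x ∈ R, 0 ≤ x) ∧ ∀ x ∈ R, ∀ y ∈ R, x ≠ y → τ.T ≤ |x - y|

/-- Case 1: `t2 - t1 ≤ D - D^L`; no job of the task executes after the switch. -/
def case1 (τ : Task) (t1 t2 : ℝ) : Prop := t2 - t1 ≤ τ.D - τ.DL

/-- Case 2: the carry-over job contributes demand after the switch. -/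
def case2 (τ : Task) (t1 t2 : ℝ) : Prop :=
  τ.D - τ.DL < MOD (t2 - t1) τ.T ∧ MOD (t2 - t1) τ.T < τ.D ∧
    (⌊(t2 - t1) / τ.T⌋ : ℝ) * τ.T + τ.D ≤ t2

/-- Case 3: neither case 1 nor case 2. -/
def case3 (τ : Task) (t1 t2 : ℝ) : Prop := ¬ case1 τ t1 t2 ∧ ¬ case2 τ t1 t2

/-- Set `S(t)` of HC tasks whose carry-over job contributes demand in an interval of
length `t` (existing test). -/
noncomputable def Sset {n : ℕ} (τ : Fin n → Task) (hc : Fin n → Bool) (t : ℝ) :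
    Finset (Fin n) :=
  univ.filter fun i =>
    hc i = true ∧ (τ i).D - (τ i).DL < MOD t (τ i).T ∧ MOD t (τ i).T < (τ i).D

/-- The existing-test bound `E(t)` (Proposition 3, from Ekberg and Yi). -/
noncomputable def Etest {n : ℕ} (τ : Fin n → Task) (hc : Fin n → Bool) (t : ℝ) : ℝ :=
  ∑ i ∈ univ.filter (fun i => hc i = true), dbfH (τ i) t +
    ∑ i ∈ Sset τ hc t, (((τ i).CH - (τ i).CL) + CO (τ i) t)

/-- `U`: the set of LC tasks together with HC tasks in case 1. -/
noncomputable def Uset {n : ℕ} (τ : Fin n → Task) (hc : Fin n → Bool) (t1 t2 : ℝ) :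
    Finset (Fin n) :=
  univ.filter fun i => hc i = false ∨ case1 (τ i) t1 t2

/-- HC tasks in case 2. -/
noncomputable def H2set {n : ℕ} (τ : Fin n → Task) (hc : Fin n → Bool) (t1 t2 : ℝ) :
    Finset (Fin n) :=
  univ.filter fun i => hc i = true ∧ case2 (τ i) t1 t2

/-- HC tasks in case 3. -/
noncomputable def H3set {n : ℕ} (τ : Fin n → Task) (hc : Fin n → Bool) (t1 t2 : ℝ) :
    Finset (Fin n) :=
  univ.filter fun i => hc i = true ∧ case3 (τ i) t1 t2

/-- The new-test bound `N(t1,t2)` of Theorem 1. -/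
noncomputable def Ntest {n : ℕ} (τ : Fin n → Task) (hc : Fin n → Bool) (t1 t2 : ℝ) : ℝ :=
  ∑ i ∈ Uset τ hc t1 t2, (dbfL (τ i) t1 + dbfUN (τ i) t1 t2) +
    ∑ i ∈ H2set τ hc t1 t2, (dbfL2 (τ i) t1 t2 + dbfH (τ i) (t2 - t1) + (τ i).CH) +
    ∑ i ∈ H3set τ hc t1 t2, (dbfL2 (τ i) t1 t2 + dbfH (τ i) (t2 - t1) + (τ i).CL)

/-- Collective bound `dbf_{UN}(t1,t2)` on the demand of all unnecessary jobs (Lemma 5). -/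
noncomputable def dbfUNtot {n : ℕ} (τ : Fin n → Task) (hc : Fin n → Bool) (t1 t2 : ℝ) : ℝ :=
  if h : (Uset τ hc t1 t2).Nonempty then
    min ((Uset τ hc t1 t2).sup' h fun i => (τ i).DL)
      (∑ i ∈ Uset τ hc t1 t2, dbfUN (τ i) t1 t2)
  else 0

/-- `dbf_{L1}(t1,t2)` (Lemma 7). -/
noncomputable def dbfL1tot {n : ℕ} (τ : Fin n → Task) (hc : Fin n → Bool) (t1 t2 : ℝ) : ℝ :=
  dbfUNtot τ hc t1 t2 + ∑ i ∈ Uset τ hc t1 t2, dbfL (τ i) t1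

/-- `dbf_{L2}(t1,t2)` (Lemma 8). -/
noncomputable def dbfL2tot {n : ℕ} (τ : Fin n → Task) (hc : Fin n → Bool) (t1 t2 : ℝ) : ℝ :=
  ∑ i ∈ H2set τ hc t1 t2, (dbfL2 (τ i) t1 t2 + (τ i).CL - CO (τ i) (t2 - t1))

/-- `dbf_{L3}(t1,t2)` (Lemma 9). -/
noncomputable def dbfL3tot {n : ℕ} (τ : Fin n → Task) (hc : Fin n → Bool) (t1 t2 : ℝ) : ℝ :=
  ∑ i ∈ H3set τ hc t1 t2, (dbfL2 (τ i) t1 t2 + (τ i).CL)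

/-- The improved-test bound `I(t1,t2)` of Theorem 2. -/
noncomputable def Itest {n : ℕ} (τ : Fin n → Task) (hc : Fin n → Bool) (t1 t2 : ℝ) : ℝ :=
  min t1 (dbfL1tot τ hc t1 t2 + dbfL2tot τ hc t1 t2 + dbfL3tot τ hc t1 t2) +
    (∑ i ∈ H2set τ hc t1 t2, dbfH (τ i) (t2 - t1) +
      ∑ i ∈ H3set τ hc t1 t2, dbfH (τ i) (t2 - t1)) +
    ∑ i ∈ H2set τ hc t1 t2, (CO (τ i) (t2 - t1) + (τ i).CH - (τ i).CL)


/-- The HC task `τ1 = (T=6, D=4, D^L=4, C^L=1, C^H=2)` of the example. -/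
noncomputable def exTask1 : Task :=
  { T := 6, D := 4, DL := 4, CL := 1, CH := 2
    hT := by norm_num, hCL := by norm_num, hCLCH := by norm_num
    hCLDL := by norm_num, hDLD := by norm_num, hDT := by norm_num }

/-- The LC task `τ2 = (T=7, D=5, D^L=5, C^L=C^H=1)` of the example. -/
noncomputable def exTask2 : Task :=
  { T := 7, D := 5, DL := 5, CL := 1, CH := 1
    hT := by norm_num, hCL := by norm_num, hCLCH := by norm_num
    hCLDL := by norm_num, hDLD := by norm_num, hDT := by norm_num }

/-- The example task system: `τ1` is HC, `τ2` is LC. -/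
noncomputable def exSys : Fin 2 → Task := ![exTask1, exTask2]

/-- Criticality labels of the example system. -/
def exHC : Fin 2 → Bool := ![true, false]

/-- Example 1 of the paper. For the system with HC task
`τ1 = (6,4, C^L=1, C^H=2)` and LC task `τ2 = (7,5, C=1)` with tightened deadlines
equal to real deadlines: (i) the existing test fails at `t = 1` since `E(1) = 2 > 1`;
(ii) the improved test holds everywhere, `I(t1,t2) ≤ t2` for all `0 ≤ t1 < t2`.
Hence the improved test strictly dominates the existing test. -/
lemma MOD_nonneg (t : ℝ) {T : ℝ} (hT : 0 < T) : 0 ≤ MOD t T :=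
  Int.sub_floor_div_mul_nonneg t hT

lemma MOD_lt (t : ℝ) {T : ℝ} (hT : 0 < T) : MOD t T < T :=
  Int.sub_floor_div_mul_lt t hT

lemma Etest_one : Etest exSys exHC 1 = 2 := by
  have hM : MOD (1:ℝ) 6 = 1 := by
    unfold MOD; norm_num
  have hfil : (univ.filter fun i : Fin 2 => exHC i = true) = {0} := by
    ext i; fin_cases i <;> simp only [Finset.mem_filter] <;> simp [exHC]
  have hS : Sset exSys exHC 1 = {0} := by
    ext i; fin_cases i <;>
      simp only [Sset, Finset.mem_filter] <;> simp [exHC, exSys, exTask1, exTask2, hM] <;> norm_num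
  rw [Etest, hfil, hS, Finset.sum_singleton, Finset.sum_singleton]
  have h1 : dbfH (exSys 0) 1 = 0 := by
    show dbfH exTask1 1 = 0
    rw [dbfH]
    norm_num [exTask1]
  have h2 : CO (exSys 0) 1 = 1 := by
    show CO exTask1 1 = 1
    rw [CO]
    norm_num [exTask1, hM]
  rw [h1, h2]
  show 0 + (exTask1.CH - exTask1.CL + 1) = 2
  norm_num [exTask1]

lemma dbfH_exTask1_le {d : ℝ} (hd : 0 < d) : dbfH exTask1 d ≤ d := by
  rw [dbfH]
  have e1 : (d - exTask1.D) / exTask1.T = (d - 4) / 6 := rfl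
  have e2 : exTask1.CH = (2:ℝ) := rfl
  rw [e1, e2]
  rcases le_or_gt 1 d with h | h
  · refine max_le (by linarith) ?_
    have hfl := Int.floor_le ((d - 4) / 6)
    linarith
  · have hf : ⌊(d - 4) / 6⌋ = -1 := by
      rw [Int.floor_eq_iff]
      push_cast
      constructor
      · rw [le_div_iff₀ (by norm_num : (0:ℝ) < 6)]; linarith
      · rw [div_lt_iff₀ (by norm_num : (0:ℝ) < 6)]; linarith
    rw [hf]
    norm_num
    linarith

theorem strict_dominance_example :
    Etest exSys exHC 1 = 2 ∧ (1 : ℝ) < Etest exSys exHC 1 ∧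
      ∀ t1 t2 : ℝ, 0 ≤ t1 → t1 < t2 → Itest exSys exHC t1 t2 ≤ t2 := by
  refine ⟨Etest_one, by rw [Etest_one]; norm_num, ?_⟩
  intro t1 t2 h0 h12
  have hδ : 0 < t2 - t1 := by linarith
  have hnc1 : ¬ case1 exTask1 t1 t2 := by
    rw [case1]
    norm_num [exTask1]
    linarith
  have hU : Uset exSys exHC t1 t2 = {1} := by
    ext i; fin_cases i
    · simp only [Uset, Finset.mem_filter]; simpa [exHC, exSys] using hnc1
    · simp only [Uset, Finset.mem_filter]; simp [exHC, exSys]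
  have hUNtot : dbfUNtot exSys exHC t1 t2 ≤ 1 := by
    rw [dbfUNtot, hU, dif_pos (Finset.singleton_nonempty _)]
    refine le_trans (min_le_right _ _) ?_
    rw [Finset.sum_singleton]
    show dbfUN exTask2 t1 t2 ≤ 1
    rw [dbfUN]
    split
    · refine le_trans (min_le_left _ _) ?_
      norm_num [exTask2]
    · norm_num
  have hdbfL : dbfL exTask2 t1 ≤ (t1 + 2) / 7 := by
    rw [dbfL]
    have e1 : (t1 - exTask2.DL) / exTask2.T = (t1 - 5) / 7 := rfl
    have e2 : exTask2.CL = (1:ℝ) := rfl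
    rw [e1, e2]
    refine max_le (by linarith) ?_
    have hfl := Int.floor_le ((t1 - 5) / 7)
    linarith
  by_cases h2 : case2 exTask1 t1 t2
  · -- task 1 in case 2
    have hH2 : H2set exSys exHC t1 t2 = {0} := by
      ext i; fin_cases i
      · simp only [H2set, Finset.mem_filter]; simp [exHC, exSys, h2]
      · simp only [H2set, Finset.mem_filter]; simp [exHC, exSys]
    have hH3 : H3set exSys exHC t1 t2 = ∅ := by
      ext i; fin_cases i
      · simp only [H3set, Finset.mem_filter]; simp [exHC, exSys, case3, h2]
      · simp only [H3set, Finset.mem_filter]; simp [exHC, exSys]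
    have hr0 : (4:ℝ) - 4 < MOD (t2 - t1) 6 := h2.1
    have hr4 : MOD (t2 - t1) 6 < 4 := h2.2.1
    have ht2b : ((⌊(t2 - t1) / 6⌋ : ℤ) : ℝ) * 6 + 4 ≤ t2 := h2.2.2
    set k : ℤ := ⌊(t2 - t1) / 6⌋ with hk
    have hrdef : MOD (t2 - t1) 6 = (t2 - t1) - (k : ℝ) * 6 := rfl
    have hk0 : (0:ℤ) ≤ k := Int.floor_nonneg.mpr (by positivity)
    have hk0' : (0:ℝ) ≤ (k:ℝ) := by exact_mod_cast hk0
    have hMnn : (0:ℝ) ≤ MOD (t2 - t1) 6 := MOD_nonneg _ (by norm_num)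
    have hfloor : ⌊((t2 - t1) - 4) / 6⌋ = k - 1 := by
      rw [Int.floor_eq_iff]
      push_cast
      constructor
      · rw [le_div_iff₀ (by norm_num : (0:ℝ) < 6)]
        rw [hrdef] at hMnn; linarith
      · rw [div_lt_iff₀ (by norm_num : (0:ℝ) < 6)]
        rw [hrdef] at hr4; linarith
    have hdbfH : dbfH exTask1 (t2 - t1) = 2 * (k : ℝ) := by
      rw [dbfH]
      have e1 : (t2 - t1 - exTask1.D) / exTask1.T = ((t2 - t1) - 4) / 6 := rfl
      have e2 : exTask1.CH = (2:ℝ) := rfl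
      rw [e1, e2, hfloor, max_eq_right]
      · push_cast; ring
      · push_cast; linarith
    have hCOdef : CO exTask1 (t2 - t1) = min 1 (MOD (t2 - t1) 6) := by
      have h : CO exTask1 (t2 - t1) = min (1:ℝ) (MOD (t2 - t1) 6 - (4 - 4)) := rfl
      rw [h]; norm_num
    have hCOle : CO exTask1 (t2 - t1) ≤ 1 := by
      rw [hCOdef]; exact min_le_left _ _
    have hCOnn : 0 ≤ CO exTask1 (t2 - t1) := by
      rw [hCOdef]; exact le_min (by norm_num) hMnn
    have hCOr : CO exTask1 (t2 - t1) ≤ MOD (t2 - t1) 6 := by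
      rw [hCOdef]; exact min_le_right _ _
    have hsys0 : exSys 0 = exTask1 := rfl
    have hsys1 : exSys 1 = exTask2 := rfl
    have hCH : exTask1.CH = (2:ℝ) := rfl
    have hCL : exTask1.CL = (1:ℝ) := rfl
    rw [Itest, dbfL1tot, dbfL2tot, dbfL3tot, hU, hH2, hH3]
    simp only [Finset.sum_singleton, Finset.sum_empty]
    rw [hsys0, hsys1, hdbfH, hCH, hCL]
    by_cases hA : 2 * (k:ℝ) + CO exTask1 (t2 - t1) + 1 ≤ t2 - t1
    · refine le_trans
        (add_le_add_left (add_le_add_left (min_le_left _ _) _) _) ?_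
      linarith
    · push_neg at hA
      have hkz : k = 0 := by
        by_contra hne
        have hk1 : (1:ℤ) ≤ k := lt_of_le_of_ne hk0 (Ne.symm hne)
        have hk1' : (1:ℝ) ≤ (k:ℝ) := by exact_mod_cast hk1
        rw [hrdef] at hCOr
        linarith
      have hk0'' : (k:ℝ) = 0 := by rw [hkz]; norm_num
      have ht24 : (4:ℝ) ≤ t2 := by
        rw [hk0''] at ht2b; linarith
      have hdbfL2 : dbfL2 exTask1 t1 t2 ≤ (t2 - 4) / 6 := by
        rw [dbfL2]
        have e1 : (t2 - exTask1.D) / exTask1.T = (t2 - 4) / 6 := rfl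
        have e2 : (t2 - t1 - exTask1.D) / exTask1.T = ((t2 - t1) - 4) / 6 := rfl
        rw [e1, e2, hfloor, hkz, hCL, mul_one]
        push_cast
        refine max_le (by linarith) ?_
        have hfl := Int.floor_le ((t2 - 4) / 6)
        linarith
      refine le_trans
        (add_le_add_left (add_le_add_left (min_le_right _ _) _) _) ?_
      linarith
  · -- task 1 in case 3
    have h3 : case3 exTask1 t1 t2 := ⟨hnc1, h2⟩
    have hH2 : H2set exSys exHC t1 t2 = ∅ := by
      ext i; fin_cases i
      · simp only [H2set, Finset.mem_filter]; simp [exHC, exSys, h2]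
      · simp only [H2set, Finset.mem_filter]; simp [exHC, exSys]
    have hH3 : H3set exSys exHC t1 t2 = {0} := by
      ext i; fin_cases i
      · simp only [H3set, Finset.mem_filter]; simp [exHC, exSys, h3]
      · simp only [H3set, Finset.mem_filter]; simp [exHC, exSys]
    have hsys0 : exSys 0 = exTask1 := rfl
    rw [Itest, hH2, hH3]
    simp only [Finset.sum_singleton, Finset.sum_empty]
    rw [hsys0]
    have hH := dbfH_exTask1_le hδ
    refine le_trans
      (add_le_add_left (add_le_add_left (min_le_left _ _) _) _) ?_
    linarith

end MC
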